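/- Let θ(z) = Σ_{n ∈ ℤ} e^{2πi n² z} for z in the complex upper half-plane. Then for every matrix [[a,b],[c,d]] ∈ SL(2,ℤ) with c ≡ 0 (mod 4) and every z in the upper half-plane, θ((az+b)/(cz+d))⁴ = (cz+d)² θ(z)⁴; that is, θ⁴ is a modular form of weight 2 for the congruence subgroup Γ₀(4). -/

import Mathlib

open Complex

/-- The Jacobi theta function θ(z) = Σ_{n ∈ ℤ} e^{2πi n² z} on the upper half-plane. -/
noncomputable def jacobiThetaFn (z : ℂ) : ℂ :=
  ∑' n : ℤ, Complex.exp (2 * Real.pi * Complex.I * (n : ℂ) ^ 2 * z)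

lemma jacobiThetaFn_eq (z : ℂ) : jacobiThetaFn z = jacobiTheta (2 * z) := by
  refine tsum_congr fun k => ?_
  congr 1
  ring

lemma jacobiThetaFn_add_int (z : ℂ) (n : ℤ) : jacobiThetaFn (z + n) = jacobiThetaFn z := by
  refine tsum_congr fun k => ?_
  have h : 2 * (Real.pi : ℂ) * I * (k : ℂ) ^ 2 * (z + n)
      = 2 * (Real.pi : ℂ) * I * (k : ℂ) ^ 2 * z + ((k ^ 2 * n : ℤ) : ℂ) * (2 * (Real.pi : ℂ) * I) := by
    push_cast; ring
  rw [h, Complex.exp_add, Complex.exp_int_mul_two_pi_mul_I, mul_one]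

/-- Fricke involution transformation. -/
lemma jacobiThetaFn_fricke {z : ℂ} (hz : 0 < z.im) :
    jacobiThetaFn (-1 / (4 * z)) ^ 4 = -4 * z ^ 2 * jacobiThetaFn z ^ 4 := by
  have hz0 : z ≠ 0 := by intro h; rw [h] at hz; simp at hz
  have h2z : 0 < (2 * z).im := by
    have : (2 * z).im = 2 * z.im := by simp [Complex.mul_im]
    rw [this]; linarith
  set τ : UpperHalfPlane := ⟨2 * z, h2z⟩ with hτ
  have hS := jacobiTheta_S_smul τ
  have hcoe : ((ModularGroup.S • τ : UpperHalfPlane) : ℂ) = (-(2 * z))⁻¹ := by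
    rw [UpperHalfPlane.modular_S_smul]
  have hτc : (τ : ℂ) = 2 * z := rfl
  rw [hcoe, hτc] at hS
  have harg : 2 * (-1 / (4 * z)) = (-(2 * z))⁻¹ := by
    field_simp
    ring
  rw [jacobiThetaFn_eq, harg, hS, jacobiThetaFn_eq]
  rw [mul_pow]
  have hcpow : ((-I * (2 * z)) ^ ((1 : ℂ) / 2)) ^ 4 = (-I * (2 * z)) ^ 2 := by
    have h4 : ((4 : ℕ) : ℂ) * (1 / 2) = ((2 : ℕ) : ℂ) := by norm_num
    rw [← Complex.cpow_nat_mul (-I * (2 * z)) 4 (1 / 2), h4, Complex.cpow_natCast]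
  rw [hcpow]
  have : (-I * (2 * z)) ^ 2 = -4 * z ^ 2 := by
    rw [mul_pow, neg_pow, I_sq]
    ring
  rw [this]

lemma denom_ne_zero' {c d : ℤ} (h : ¬(c = 0 ∧ d = 0)) {z : ℂ} (hz : 0 < z.im) :
    (c : ℂ) * z + (d : ℂ) ≠ 0 := by
  intro H
  rcases eq_or_ne c 0 with hc | hc
  · subst hc
    simp only [Int.cast_zero, zero_mul, zero_add] at H
    exact h ⟨rfl, by exact_mod_cast H⟩
  · have him : ((c : ℂ) * z + (d : ℂ)).im = (c : ℝ) * z.im := by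
      simp [Complex.add_im, Complex.mul_im]
    rw [H] at him
    have h0 : (c : ℝ) * z.im = 0 := by rw [← him]; simp
    rcases mul_eq_zero.mp h0 with h | h
    · exact hc (by exact_mod_cast h)
    · exact (ne_of_gt hz) h

lemma im_moebius_pos {a b c d : ℤ} (h : a * d - b * c = 1) {z : ℂ} (hz : 0 < z.im) :
    0 < (((a : ℂ) * z + b) / ((c : ℂ) * z + d)).im := by
  have hcd : ¬(c = 0 ∧ d = 0) := by rintro ⟨rfl, rfl⟩; simp at h
  have hD : (c : ℂ) * z + (d : ℂ) ≠ 0 := denom_ne_zero' hcd hz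
  have hsq : 0 < Complex.normSq ((c : ℂ) * z + d) := Complex.normSq_pos.mpr hD
  rw [Complex.div_im, div_sub_div_same]
  have hR : (a : ℝ) * d - b * c = 1 := by exact_mod_cast h
  have key : ((a : ℂ) * z + b).im * ((c : ℂ) * z + d).re
      - ((a : ℂ) * z + b).re * ((c : ℂ) * z + d).im = z.im := by
    simp only [Complex.add_im, Complex.add_re, Complex.mul_im, Complex.mul_re,
      Complex.intCast_re, Complex.intCast_im]
    nlinarith [hR, z.im, z.re]
  rw [key]
  positivity

/-- modularity predicate for a 2×2 integer matrix with entries a b c d -/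
def Pm (a b c d : ℤ) : Prop :=
  ∀ z : ℂ, 0 < z.im →
    jacobiThetaFn (((a : ℂ) * z + (b : ℂ)) / ((c : ℂ) * z + (d : ℂ))) ^ 4
      = ((c : ℂ) * z + (d : ℂ)) ^ 2 * jacobiThetaFn z ^ 4

lemma Pm_T (n : ℤ) : Pm 1 n 0 1 := by
  intro z hz
  simp only [Int.cast_one, Int.cast_zero, one_mul, zero_mul, zero_add, div_one, one_pow]
  rw [jacobiThetaFn_add_int z n]

lemma Pm_neg {a b c d : ℤ} (P : Pm a b c d) : Pm (-a) (-b) (-c) (-d) := by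
  intro z hz
  push_cast
  have e1 : -(a : ℂ) * z + -(b : ℂ) = -((a : ℂ) * z + b) := by ring
  have e2 : -(c : ℂ) * z + -(d : ℂ) = -((c : ℂ) * z + d) := by ring
  rw [e1, e2, neg_div_neg_eq, neg_sq]
  exact P z hz

lemma Pm_mul {a1 b1 c1 d1 a2 b2 c2 d2 : ℤ} (h1 : a1 * d1 - b1 * c1 = 1)
    (h2 : a2 * d2 - b2 * c2 = 1) (P1 : Pm a1 b1 c1 d1) (P2 : Pm a2 b2 c2 d2) :
    Pm (a1 * a2 + b1 * c2) (a1 * b2 + b1 * d2) (c1 * a2 + d1 * c2) (c1 * b2 + d1 * d2) := by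
  intro z hz
  have hcd2 : ¬(c2 = 0 ∧ d2 = 0) := by rintro ⟨rfl, rfl⟩; simp at h2
  have hD2 : (c2 : ℂ) * z + (d2 : ℂ) ≠ 0 := denom_ne_zero' hcd2 hz
  set w : ℂ := ((a2 : ℂ) * z + b2) / ((c2 : ℂ) * z + d2) with hw
  have hwim : 0 < w.im := im_moebius_pos h2 hz
  have hdetp : (c1 * a2 + d1 * c2) * (a1 * b2 + b1 * d2)
      - (c1 * b2 + d1 * d2) * (a1 * a2 + b1 * c2) = -1 := by
    linear_combination (-(a1 * d1 - b1 * c1)) * h2 - h1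
  have hcdp : ¬(c1 * a2 + d1 * c2 = 0 ∧ c1 * b2 + d1 * d2 = 0) := by
    rintro ⟨e1, e2⟩; rw [e1, e2] at hdetp; simp at hdetp
  have hD : ((c1 * a2 + d1 * c2 : ℤ) : ℂ) * z + ((c1 * b2 + d1 * d2 : ℤ) : ℂ) ≠ 0 :=
    denom_ne_zero' hcdp hz
  have key1 : (c1 : ℂ) * w + d1
      = (((c1 * a2 + d1 * c2 : ℤ) : ℂ) * z + ((c1 * b2 + d1 * d2 : ℤ) : ℂ))
        / ((c2 : ℂ) * z + d2) := by
    have hD2' : z * (c2 : ℂ) + d2 ≠ 0 := by rwa [mul_comm] at hD2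
    rw [hw]; push_cast; field_simp; ring
  have hDw : (c1 : ℂ) * w + d1 ≠ 0 := by
    rw [key1]; exact div_ne_zero hD hD2
  have key2 : ((a1 : ℂ) * w + b1) / ((c1 : ℂ) * w + d1)
      = (((a1 * a2 + b1 * c2 : ℤ) : ℂ) * z + ((a1 * b2 + b1 * d2 : ℤ) : ℂ))
        / (((c1 * a2 + d1 * c2 : ℤ) : ℂ) * z + ((c1 * b2 + d1 * d2 : ℤ) : ℂ)) := by
    have hD2' : z * (c2 : ℂ) + d2 ≠ 0 := by rwa [mul_comm] at hD2
    rw [hw]; push_cast; field_simp; ring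
  have hP1 := P1 w hwim
  rw [key2] at hP1
  rw [hP1, key1, P2 z hz, div_pow]
  field_simp
  have hD2' : z * (c2 : ℂ) + d2 ≠ 0 := by rwa [mul_comm] at hD2
  field_simp

lemma Pm_inv {a b c d : ℤ} (h : a * d - b * c = 1) (P : Pm a b c d) : Pm d (-b) (-c) a := by
  intro z hz
  have hdet' : d * a - (-b) * (-c) = 1 := by linear_combination h
  have hC : (a : ℂ) * d - (b : ℂ) * c = 1 := by exact_mod_cast h
  have hcd' : ¬((-c : ℤ) = 0 ∧ a = 0) := by
    rintro ⟨e1, e2⟩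
    have hc0 : c = 0 := by omega
    rw [e2, hc0] at h
    norm_num at h
  have hD' : ((-c : ℤ) : ℂ) * z + (a : ℂ) ≠ 0 := denom_ne_zero' hcd' hz
  push_cast at hD' ⊢
  set D : ℂ := -(c : ℂ) * z + (a : ℂ) with hD0
  set w : ℂ := ((d : ℂ) * z + -(b : ℂ)) / D with hw
  have hwim : 0 < w.im := by
    have := im_moebius_pos hdet' hz
    push_cast at this
    exact this
  have hP := P w hwim
  have e1 : (a : ℂ) * w + b = z / D := by
    rw [hw]; field_simp; linear_combination z * hC + b * hD0
  have e2 : (c : ℂ) * w + d = 1 / D := by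
    rw [hw]; field_simp; linear_combination hC + d * hD0
  have key1 : ((a : ℂ) * w + b) / ((c : ℂ) * w + d) = z := by
    rw [e1, e2]; field_simp
  rw [key1, e2] at hP
  rw [hP]
  field_simp

lemma Pm_V : Pm 1 0 4 1 := by
  intro z hz
  have hz0 : z ≠ 0 := fun h => by rw [h] at hz; simp at hz
  have h4z : (4 : ℂ) * z ≠ 0 := by
    intro h; exact hz0 (by simpa using h)
  have hD : (4 : ℂ) * z + 1 ≠ 0 := by
    intro h
    have h1 : ((4 : ℂ) * z + 1).im = 4 * z.im := by simp [Complex.add_im, Complex.mul_im]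
    rw [h] at h1
    simp at h1
    linarith
  set u : ℂ := -1 / (4 * z) with hu
  have huim : 0 < u.im := by
    have h1 : u = -((4 * z)⁻¹) := by rw [hu]; field_simp
    have h3 : 0 < Complex.normSq (4 * z) := Complex.normSq_pos.mpr h4z
    rw [h1, Complex.neg_im, Complex.inv_im]
    have h2 : ((4 : ℂ) * z).im = 4 * z.im := by simp [Complex.mul_im]
    rw [h2, neg_div, neg_neg]
    positivity
  have hu1im : 0 < (u - 1).im := by
    have : (u - 1).im = u.im := by simp [Complex.sub_im]
    rw [this]; exact huim
  have hu1ne : u - 1 ≠ 0 := by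
    intro h
    rw [h] at hu1im
    simp at hu1im
  have hne : (4 : ℂ) * (u - 1) ≠ 0 := by
    intro h
    rcases mul_eq_zero.mp h with h | h
    · norm_num at h
    · exact hu1ne h
  have harg : -1 / (4 * (u - 1)) = z / (4 * z + 1) := by
    rw [div_eq_div_iff hne hD, hu]
    field_simp
    ring
  have hshift : jacobiThetaFn u = jacobiThetaFn (u - 1) := by
    have h1 : u - 1 + ((1 : ℤ) : ℂ) = u := by push_cast; ring
    conv_lhs => rw [← h1]
    rw [jacobiThetaFn_add_int]
  have hfr1 := jacobiThetaFn_fricke hu1im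
  have hfr2 := jacobiThetaFn_fricke hz
  push_cast
  rw [one_mul, add_zero]
  calc jacobiThetaFn (z / (4 * z + 1)) ^ 4
      = jacobiThetaFn (-1 / (4 * (u - 1))) ^ 4 := by rw [harg]
    _ = -4 * (u - 1) ^ 2 * jacobiThetaFn (u - 1) ^ 4 := hfr1
    _ = -4 * (u - 1) ^ 2 * (-4 * z ^ 2 * jacobiThetaFn z ^ 4) := by
        rw [← hshift, hu, hfr2]
    _ = (16 * z ^ 2 * (u - 1) ^ 2) * jacobiThetaFn z ^ 4 := by ring
    _ = (4 * z + 1) ^ 2 * jacobiThetaFn z ^ 4 := by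
        rw [hu]
        congr 1
        field_simp
        ring

lemma Pm_Vpow (m : ℤ) : Pm 1 0 (4 * m) 1 := by
  induction m using Int.induction_on with
  | zero => simpa using Pm_T 0
  | succ n ih =>
      have h := Pm_mul (show (1 : ℤ) * 1 - 0 * (4 * (n : ℤ)) = 1 by ring)
        (show (1 : ℤ) * 1 - 0 * 4 = 1 by ring) ih Pm_V
      rw [show (1 : ℤ) * 1 + 0 * 4 = 1 from by ring,
          show (1 : ℤ) * 0 + 0 * 1 = 0 from by ring,
          show (4 * (n : ℤ)) * 1 + 1 * 4 = 4 * ((n : ℤ) + 1) from by ring,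
          show (4 * (n : ℤ)) * 0 + 1 * 1 = 1 from by ring] at h
      exact h
  | pred n ih =>
      have hVinv := Pm_inv (show (1 : ℤ) * 1 - 0 * 4 = 1 by ring) Pm_V
      rw [show (-(0 : ℤ)) = 0 from by ring] at hVinv
      have h := Pm_mul (show (1 : ℤ) * 1 - 0 * (4 * (-(n : ℤ))) = 1 by ring)
        (show (1 : ℤ) * 1 - 0 * (-4) = 1 by ring) ih hVinv
      rw [show (1 : ℤ) * 1 + 0 * (-4) = 1 from by ring,
          show (1 : ℤ) * 0 + 0 * 1 = 0 from by ring,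
          show (4 * (-(n : ℤ))) * 1 + 1 * (-4) = 4 * (-(n : ℤ) - 1) from by ring,
          show (4 * (-(n : ℤ))) * 0 + 1 * 1 = 1 from by ring] at h
      exact h

lemma Pm_all : ∀ k : ℕ, ∀ a b c d : ℤ, a * d - b * c = 1 → 4 ∣ c → c.natAbs = k →
    Pm a b c d := by
  intro k
  induction k using Nat.strong_induction_on with
  | _ k IH =>
  intro a b c d hdet hc4 hk
  rcases eq_or_ne c 0 with rfl | hc0
  · have had : a * d = 1 := by linear_combination hdet
    rcases Int.mul_eq_one_iff_eq_one_or_neg_one.mp had with ⟨rfl, rfl⟩ | ⟨rfl, rfl⟩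
    · exact Pm_T b
    · have h := Pm_neg (Pm_T (-b))
      rw [show (-(-b) : ℤ) = b from by ring, show (-(0:ℤ)) = 0 from by ring] at h
      exact h
  · -- inductive step
    have h2c : (2 : ℤ) ∣ c := by rcases hc4 with ⟨q, rfl⟩; exact ⟨2 * q, by ring⟩
    have hodda : Odd a := by
      have h1 : Odd (a * d) := by
        rcases h2c with ⟨t, ht⟩
        exact ⟨b * t, by linear_combination hdet + b * ht⟩
      exact (Int.odd_mul.mp h1).1
    set c' : ℤ := (c.natAbs : ℤ) with hc'
    have hc'pos : 0 < c' := by omega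
    have hc'4 : (4 : ℤ) ∣ c' := Int.dvd_natAbs.mpr hc4
    set r : ℤ := a % c' with hr
    have hr0 : 0 ≤ r := Int.emod_nonneg a (ne_of_gt hc'pos)
    have hr1 : r < c' := Int.emod_lt_of_pos a hc'pos
    set a' : ℤ := if 2 * r < c' then r else r - c' with ha'
    have hcases : a' = r ∧ 2 * r < c' ∨ a' = r - c' ∧ ¬(2 * r < c') := by
      rw [ha']; split_ifs with h
      · exact Or.inl ⟨rfl, h⟩
      · exact Or.inr ⟨rfl, h⟩
    have hdvdc : c ∣ (a' - a) := by
      have h1 : c' ∣ (r - a) := ⟨-(a / c'), by rw [hr, Int.emod_def]; ring⟩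
      have h2 : c' ∣ (a' - a) := by
        rcases hcases with ⟨he, _⟩ | ⟨he, _⟩
        · rw [he]; exact h1
        · rw [he]
          have := dvd_sub h1 (dvd_refl c')
          convert this using 1
          rfl
          ring
      exact Int.natAbs_dvd.mp (by rw [← hc']; exact h2)
    obtain ⟨n, hn⟩ := hdvdc
    have hodd' : a' % 2 = 1 := by
      rcases h2c with ⟨t, ht⟩
      rcases hodda with ⟨s, hs⟩
      have : a' = 2 * (s + t * n) + 1 := by linear_combination hn + hs + n * ht
      omega
    have hbound : 2 * a'.natAbs < c.natAbs := by omega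
    set b' : ℤ := b + n * d with hb'
    set A : ℤ := (a'.natAbs : ℤ) with hA
    have hApos : 0 < A := by omega
    have h4A : (0 : ℤ) < 4 * A := by omega
    set r2 : ℤ := c % (4 * A) with hr2
    have hr20 : 0 ≤ r2 := Int.emod_nonneg c (ne_of_gt h4A)
    have hr21 : r2 < 4 * A := Int.emod_lt_of_pos c h4A
    set c'' : ℤ := if 2 * r2 ≤ 4 * A then r2 else r2 - 4 * A with hc''def
    have hcases2 : c'' = r2 ∧ 2 * r2 ≤ 4 * A ∨ c'' = r2 - 4 * A ∧ ¬(2 * r2 ≤ 4 * A) := by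
      rw [hc''def]; split_ifs with h
      · exact Or.inl ⟨rfl, h⟩
      · exact Or.inr ⟨rfl, h⟩
    have hdvd2 : (4 * A) ∣ (c'' - c) := by
      have h1 : (4 * A) ∣ (r2 - c) := ⟨-(c / (4 * A)), by rw [hr2, Int.emod_def]; ring⟩
      rcases hcases2 with ⟨he, _⟩ | ⟨he, _⟩
      · rw [he]; exact h1
      · rw [he]
        have := dvd_sub h1 (dvd_refl (4 * A))
        convert this using 1
        rfl
        ring
    obtain ⟨t2, ht2⟩ := hdvd2
    set m : ℤ := if 0 ≤ a' then t2 else -t2 with hm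
    have hc''eq : c'' = c + 4 * m * a' := by
      rw [hm]; split_ifs with hs
      · have hAa : A = a' := by omega
        linear_combination ht2 + 4 * t2 * hAa
      · have hAa : A = -a' := by omega
        linear_combination ht2 + 4 * t2 * hAa
    have hc''4 : (4 : ℤ) ∣ c'' := by
      obtain ⟨q, hq⟩ := hc4
      exact ⟨q + A * t2, by linear_combination ht2 + hq⟩
    have hbound2 : c''.natAbs < c.natAbs := by omega
    set d'' : ℤ := d + 4 * m * b' with hd''
    have ha'eq : a' = a + c * n := by linear_combination hn
    have hdet'' : a' * d'' - b' * c'' = 1 := by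
      rw [hd'', hc''eq, hb', ha'eq]
      linear_combination hdet
    have hk'' : c''.natAbs < k := by omega
    have PIH : Pm a' b' c'' d'' := IH c''.natAbs hk'' a' b' c'' d'' hdet'' hc''4 rfl
    have PV := Pm_Vpow (-m)
    have step1 : Pm a' b' c d := by
      have h := Pm_mul (show (1 : ℤ) * 1 - 0 * (4 * (-m)) = 1 by ring) hdet'' PV PIH
      rw [show (1 : ℤ) * a' + 0 * c'' = a' from by ring,
          show (1 : ℤ) * b' + 0 * d'' = b' from by ring,
          show (4 * (-m)) * a' + 1 * c'' = c from by linear_combination hc''eq,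
          show (4 * (-m)) * b' + 1 * d'' = d from by linear_combination hd''] at h
      exact h
    have step1det : a' * d - b' * c = 1 := by
      rw [hb', ha'eq]; linear_combination hdet
    have h := Pm_mul (show (1 : ℤ) * 1 - (-n) * 0 = 1 by ring) step1det (Pm_T (-n)) step1
    rw [show (1 : ℤ) * a' + (-n) * c = a from by linear_combination hn,
        show (1 : ℤ) * b' + (-n) * d = b from by linear_combination hb',
        show (0 : ℤ) * a' + 1 * c = c from by ring,
        show (0 : ℤ) * b' + 1 * d = d from by ring] at h
    exact h

/-- θ⁴ is a modular form of weight 2 for Γ₀(4): for [[a,b],[c,d]] ∈ SL(2,ℤ)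
with 4 ∣ c and z in the upper half-plane, θ((az+b)/(cz+d))⁴ = (cz+d)² θ(z)⁴. -/
theorem jacobiTheta_pow_four_weight_two_gamma0_four
    (γ : Matrix.SpecialLinearGroup (Fin 2) ℤ) (hγ : (4 : ℤ) ∣ γ 1 0)
    (z : ℂ) (hz : 0 < z.im) :
    (jacobiThetaFn ((((γ 0 0 : ℤ) : ℂ) * z + ((γ 0 1 : ℤ) : ℂ)) /
        (((γ 1 0 : ℤ) : ℂ) * z + ((γ 1 1 : ℤ) : ℂ)))) ^ 4
      = (((γ 1 0 : ℤ) : ℂ) * z + ((γ 1 1 : ℤ) : ℂ)) ^ 2 * (jacobiThetaFn z) ^ 4 := by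
  have hdet : γ 0 0 * γ 1 1 - γ 0 1 * γ 1 0 = 1 := by
    have h := γ.2
    rw [Matrix.det_fin_two] at h
    exact h
  exact Pm_all (γ 1 0).natAbs (γ 0 0) (γ 0 1) (γ 1 0) (γ 1 1) hdet hγ rfl z hz
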